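/- Suppose the finite collection (W1,W2,X1^N,X2^N,Z^N) satisfies: (W1,W2) → (X1^N,X2^N) → Z^N is a Markov chain, H(W1|X1^N) = 0, H(W2|X2^N) = 0, X1^N independent of X2^N, (1/N)H(X1^N) ≥ R1 + R1* − ε1, (1/N)H(X2^N) ≥ R2 + R2* − ε2, (1/N)I(X1^N,X2^N;Z^N) = I(X1,X2;Z) (single-letter value), (1/N)H(X1^N,X2^N|W1,W2,Z^N) ≤ ε3, and R1* + R2* = I(X1,X2;Z). Then (1/N)H(W1,W2|Z^N) ≥ R1 + R2 − ε1 − ε2 − ε3. -/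

import Mathlib

open MeasureTheory Real

noncomputable def pr {Ω : Type*} [MeasurableSpace Ω] (μ : Measure Ω) (s : Set Ω) : ℝ :=
  (μ s).toReal

/-- Shannon entropy of a finitely-valued random variable. -/
noncomputable def ent {Ω : Type*} [MeasurableSpace Ω] (μ : Measure Ω)
    {α : Type*} [Fintype α] (X : Ω → α) : ℝ :=
  -∑ a : α, pr μ (X ⁻¹' {a}) * Real.log (pr μ (X ⁻¹' {a}))

/-- Conditional Shannon entropy H(X|Y) = H(X,Y) - H(Y). -/
noncomputable def condEnt {Ω : Type*} [MeasurableSpace Ω] (μ : Measure Ω)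
    {α β : Type*} [Fintype α] [Fintype β] (X : Ω → α) (Y : Ω → β) : ℝ :=
  ent μ (fun ω => (X ω, Y ω)) - ent μ Y

/-- Mutual information I(X;Y) = H(X) + H(Y) - H(X,Y). -/
noncomputable def mi {Ω : Type*} [MeasurableSpace Ω] (μ : Measure Ω)
    {α β : Type*} [Fintype α] [Fintype β] (X : Ω → α) (Y : Ω → β) : ℝ :=
  ent μ X + ent μ Y - ent μ (fun ω => (X ω, Y ω))

/-- Conditional mutual information I(X;Y|Z). -/
noncomputable def cmi {Ω : Type*} [MeasurableSpace Ω] (μ : Measure Ω)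
    {α β γ : Type*} [Fintype α] [Fintype β] [Fintype γ]
    (X : Ω → α) (Y : Ω → β) (Z : Ω → γ) : ℝ :=
  condEnt μ X Z + condEnt μ Y Z - condEnt μ (fun ω => (X ω, Y ω)) Z

/-- Independence of two random variables. -/
def IndepRV {Ω : Type*} [MeasurableSpace Ω] (μ : Measure Ω)
    {α β : Type*} (X : Ω → α) (Y : Ω → β) : Prop :=
  ∀ a b, μ (X ⁻¹' {a} ∩ Y ⁻¹' {b}) = μ (X ⁻¹' {a}) * μ (Y ⁻¹' {b})

/-- X and Y are conditionally independent given Z (Markov chain X → Z → Y). -/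
def CondIndepRV {Ω : Type*} [MeasurableSpace Ω] (μ : Measure Ω)
    {α β γ : Type*} (X : Ω → α) (Y : Ω → β) (Z : Ω → γ) : Prop :=
  ∀ a b c, μ (X ⁻¹' {a} ∩ Y ⁻¹' {b} ∩ Z ⁻¹' {c}) * μ (Z ⁻¹' {c}) =
    μ (X ⁻¹' {a} ∩ Z ⁻¹' {c}) * μ (Y ⁻¹' {b} ∩ Z ⁻¹' {c})

/-- Mutual independence of three random variables. -/
def Indep3RV {Ω : Type*} [MeasurableSpace Ω] (μ : Measure Ω)
    {α β γ : Type*} (X : Ω → α) (Y : Ω → β) (Z : Ω → γ) : Prop :=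
  (∀ a b c, μ (X ⁻¹' {a} ∩ Y ⁻¹' {b} ∩ Z ⁻¹' {c}) =
    μ (X ⁻¹' {a}) * μ (Y ⁻¹' {b}) * μ (Z ⁻¹' {c})) ∧
  IndepRV μ X Y ∧ IndepRV μ X Z ∧ IndepRV μ Y Z

set_option linter.unusedSectionVars false

section helpers
variable {Ω : Type*} [MeasurableSpace Ω] (μ : Measure Ω) [IsProbabilityMeasure μ]

lemma pr_nonneg (s : Set Ω) : 0 ≤ pr μ s := ENNReal.toReal_nonneg

lemma pr_le_one (s : Set Ω) : pr μ s ≤ 1 := by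
  have h := prob_le_one (μ := μ) (s := s)
  have := ENNReal.toReal_mono (by simp) h
  simpa [pr] using this

lemma pr_mono {s t : Set Ω} (h : s ⊆ t) : pr μ s ≤ pr μ t :=
  ENNReal.toReal_mono (measure_ne_top μ t) (measure_mono h)

lemma pr_empty : pr μ (∅ : Set Ω) = 0 := by simp [pr]

lemma pr_le_sum {ι : Type*} [Fintype ι] {s : Set Ω} (f : ι → Set Ω)
    (h : s ⊆ ⋃ i, f i) : pr μ s ≤ ∑ i, pr μ (f i) := by
  have h1 : μ s ≤ ∑ i, μ (f i) :=
    le_trans (measure_mono h) (measure_iUnion_fintype_le μ f)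
  have h2 := ENNReal.toReal_mono (a := μ s) ?_ h1
  · rw [ENNReal.toReal_sum] at h2
    · exact h2
    · intro i _; exact measure_ne_top μ _
  · exact ENNReal.sum_ne_top.mpr fun i _ => measure_ne_top μ _

lemma ent_eq {α : Type*} [Fintype α] (X : Ω → α) :
    ent μ X = ∑ a : α, Real.negMulLog (pr μ (X ⁻¹' {a})) := by
  simp [ent, Real.negMulLog, ← Finset.sum_neg_distrib, neg_mul]

lemma ent_nonneg {α : Type*} [Fintype α] (X : Ω → α) : 0 ≤ ent μ X := by
  rw [ent_eq]
  exact Finset.sum_nonneg fun a _ =>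
    Real.negMulLog_nonneg (pr_nonneg μ _) (pr_le_one μ _)

lemma sum_pr_ge_one {α : Type*} [Fintype α] (X : Ω → α) :
    1 ≤ ∑ a : α, pr μ (X ⁻¹' {a}) := by
  have h : (Set.univ : Set Ω) ⊆ ⋃ a, X ⁻¹' {a} := by
    intro ω _; exact Set.mem_iUnion.mpr ⟨X ω, rfl⟩
  have := pr_le_sum μ (fun a => X ⁻¹' {a}) h
  simpa [pr] using this

lemma negMulLog_le_sum {ι : Type*} [Fintype ι] (q : ℝ) (p : ι → ℝ)
    (hq0 : 0 ≤ q) (hq1 : q ≤ 1) (hp0 : ∀ i, 0 ≤ p i) (hpq : ∀ i, p i ≤ q)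
    (hq : q ≤ ∑ i, p i) :
    Real.negMulLog q ≤ ∑ i, Real.negMulLog (p i) := by
  have hlogq : Real.log q ≤ 0 := Real.log_nonpos hq0 hq1
  calc Real.negMulLog q = q * (-Real.log q) := by simp only [Real.negMulLog]; ring
    _ ≤ (∑ i, p i) * (-Real.log q) := by
        apply mul_le_mul_of_nonneg_right hq (by linarith)
    _ = ∑ i, p i * (-Real.log q) := by rw [Finset.sum_mul]
    _ ≤ ∑ i, Real.negMulLog (p i) := by
        apply Finset.sum_le_sum
        intro i _
        rcases eq_or_lt_of_le (hp0 i) with h | h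
        · simp [← h, Real.negMulLog]
        · have hl : Real.log (p i) ≤ Real.log q := Real.log_le_log h (hpq i)
          simp only [Real.negMulLog]
          nlinarith

lemma ent_le_ent_pair {α β : Type*} [Fintype α] [Fintype β] (X : Ω → α) (Y : Ω → β) :
    ent μ Y ≤ ent μ (fun ω => (X ω, Y ω)) := by
  rw [ent_eq, ent_eq, Fintype.sum_prod_type, Finset.sum_comm]
  apply Finset.sum_le_sum
  intro b _
  apply negMulLog_le_sum (pr μ (Y ⁻¹' {b}))
    (fun a => pr μ ((fun ω => (X ω, Y ω)) ⁻¹' {(a, b)}))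
    (pr_nonneg μ _) (pr_le_one μ _) (fun a => pr_nonneg μ _)
  · intro a
    apply pr_mono
    intro ω hω
    simp only [Set.mem_preimage, Set.mem_singleton_iff, Prod.mk.injEq] at hω ⊢
    exact hω.2
  · apply pr_le_sum
    intro ω hω
    simp only [Set.mem_preimage, Set.mem_singleton_iff] at hω
    exact Set.mem_iUnion.mpr ⟨X ω, by simp [hω]⟩

lemma ent_comp_le {α β : Type*} [Fintype α] [Fintype β] (T : Ω → α) (g : α → β) :
    ent μ (fun ω => g (T ω)) ≤ ent μ T := by
  have h1 : ent μ (fun ω => g (T ω)) ≤ ent μ (fun ω => (T ω, g (T ω))) :=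
    ent_le_ent_pair μ T (fun ω => g (T ω))
  have h2 : ent μ (fun ω => (T ω, g (T ω))) = ent μ T := by
    rw [ent_eq, ent_eq, Fintype.sum_prod_type]
    refine Finset.sum_congr rfl fun a _ => ?_
    rw [Finset.sum_eq_single (g a)]
    · congr 1
      congr 1
      ext ω
      simp [Prod.ext_iff]
      tauto
    · intro b _ hb
      have : (fun ω => (T ω, g (T ω))) ⁻¹' {(a, b)} = (∅ : Set Ω) := by
        ext ω
        simp [Prod.ext_iff]
        intro h; rw [h]; exact fun hc => hb hc.symm
      rw [this, pr_empty]
      simp [Real.negMulLog]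
    · intro h; exact absurd (Finset.mem_univ _) h
  linarith

lemma ent_add_le_ent_pair {α β : Type*} [Fintype α] [Fintype β] (X : Ω → α) (Y : Ω → β)
    (h : IndepRV μ X Y) : ent μ X + ent μ Y ≤ ent μ (fun ω => (X ω, Y ω)) := by
  have hpr : ∀ a b, pr μ ((fun ω => (X ω, Y ω)) ⁻¹' {(a, b)}) =
      pr μ (X ⁻¹' {a}) * pr μ (Y ⁻¹' {b}) := by
    intro a b
    have hs : (fun ω => (X ω, Y ω)) ⁻¹' {(a, b)} = X ⁻¹' {a} ∩ Y ⁻¹' {b} := by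
      ext ω; simp [Prod.ext_iff]
    rw [pr, hs, h a b, ENNReal.toReal_mul]; rfl
  rw [ent_eq μ (fun ω => (X ω, Y ω)), Fintype.sum_prod_type]
  have : ∀ a : α, ∑ b : β, Real.negMulLog (pr μ ((fun ω => (X ω, Y ω)) ⁻¹' {(a, b)}))
      = ∑ b : β, (pr μ (Y ⁻¹' {b}) * Real.negMulLog (pr μ (X ⁻¹' {a}))
        + pr μ (X ⁻¹' {a}) * Real.negMulLog (pr μ (Y ⁻¹' {b}))) := by
    intro a
    refine Finset.sum_congr rfl fun b _ => ?_
    rw [hpr a b, Real.negMulLog_mul]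
  rw [Finset.sum_congr rfl fun a _ => this a]
  simp only [Finset.sum_add_distrib, ← Finset.sum_mul, ← Finset.mul_sum]
  have hEX' : ∑ a : α, Real.negMulLog (pr μ (X ⁻¹' {a})) = ent μ X := (ent_eq μ X).symm
  have hEY' : ∑ b : β, Real.negMulLog (pr μ (Y ⁻¹' {b})) = ent μ Y := (ent_eq μ Y).symm
  rw [hEX', hEY']
  have hSX := sum_pr_ge_one μ X
  have hSY := sum_pr_ge_one μ Y
  have hEX := ent_nonneg μ X
  have hEY := ent_nonneg μ Y
  nlinarith

end helpers

/-- the equivocation-analysis calculation in the DF achievability proof. -/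
theorem stmt16 {Ω : Type*} [MeasurableSpace Ω] (μ : Measure Ω) [IsProbabilityMeasure μ]
    {α β γ1 γ2 δ : Type*} [Fintype α] [Fintype β] [Fintype γ1] [Fintype γ2] [Fintype δ]
    (W1 : Ω → α) (W2 : Ω → β) (X1N : Ω → γ1) (X2N : Ω → γ2) (ZN : Ω → δ)
    (N R1 R2 R1s R2s ε1 ε2 ε3 c : ℝ) (hN : 0 < N)
    (hR1 : 0 ≤ R1) (hR2 : 0 ≤ R2) (hR1s : 0 ≤ R1s) (hR2s : 0 ≤ R2s)
    (hε1 : 0 ≤ ε1) (hε2 : 0 ≤ ε2) (hε3 : 0 ≤ ε3) (hc : 0 ≤ c)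
    (hMarkov : CondIndepRV μ (fun ω => (W1 ω, W2 ω)) ZN (fun ω => (X1N ω, X2N ω)))
    (hW1 : condEnt μ W1 X1N = 0) (hW2 : condEnt μ W2 X2N = 0)
    (hInd : IndepRV μ X1N X2N)
    (h1 : ent μ X1N / N ≥ R1 + R1s - ε1)
    (h2 : ent μ X2N / N ≥ R2 + R2s - ε2)
    (h3 : mi μ (fun ω => (X1N ω, X2N ω)) ZN / N = c)
    (h4 : condEnt μ (fun ω => (X1N ω, X2N ω)) (fun ω => (W1 ω, W2 ω, ZN ω)) / N ≤ ε3)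
    (h5 : R1s + R2s = c) :
    condEnt μ (fun ω => (W1 ω, W2 ω)) ZN / N ≥ R1 + R2 - ε1 - ε2 - ε3 := by
  simp only [mi] at h3
  simp only [condEnt] at h4 ⊢
  rw [ge_iff_le, le_div_iff₀ hN]
  rw [ge_iff_le, le_div_iff₀ hN] at h1 h2
  rw [div_le_iff₀ hN] at h4
  rw [div_eq_iff (ne_of_gt hN)] at h3
  have hD : ent μ X1N + ent μ X2N ≤ ent μ (fun ω => (X1N ω, X2N ω)) :=
    ent_add_le_ent_pair μ _ _ hInd
  have hC1 : ent μ (fun ω => ((X1N ω, X2N ω), ZN ω)) ≤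
      ent μ (fun ω => ((X1N ω, X2N ω), (W1 ω, W2 ω, ZN ω))) :=
    ent_comp_le μ (fun ω => ((X1N ω, X2N ω), (W1 ω, W2 ω, ZN ω)))
      (fun p => (p.1, p.2.2.2))
  have hEq : ent μ (fun ω => ((W1 ω, W2 ω), ZN ω)) = ent μ (fun ω => (W1 ω, W2 ω, ZN ω)) := by
    apply le_antisymm
    · exact ent_comp_le μ (fun ω => (W1 ω, W2 ω, ZN ω)) (fun p => ((p.1, p.2.1), p.2.2))
    · exact ent_comp_le μ (fun ω => ((W1 ω, W2 ω), ZN ω)) (fun p => (p.1.1, p.1.2, p.2))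
  have hc' : c * N = R1s * N + R2s * N := by rw [← h5]; ring
  nlinarith [h1, h2, h3, h4, hD, hC1, hEq, hc']
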